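/- arXiv:2306.17704 — 7 statements merged into one kernel-verified Lean document; each statement's English description precedes it below -/
import Mathlib

section
/- (Proposition 3, sufficiency of the balance condition) If there exists a real number z > 0 such that α(c)·G_{c,d}(γ(c), β(c, d)) = z for every c ∈ C and every d ∈ U_c, then (α, β) is optimal, i.e. V(α, β) ≥ V(α', β') for every feasible solution (α', β'). -/
open Finset

/-- **Proposition 3 (sufficiency of the balance condition).** If a feasible
solution `(α, β)` satisfies `α(c)·G_{c,d}(γ(c), β(c,d)) = z` for some `z > 0`,
all contexts `c` and all `d ∈ U_c`, then `(α, β)` is optimal for the objective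
`V(α, β) = min_c α(c)·min_{d ∈ U_c} G_{c,d}(γ(c), β(c,d))`. -/
theorem stmt_3 {C : Type*} [Fintype C] [Nonempty C]
    {U : C → Type*} [∀ c, Fintype (U c)] [∀ c, Nonempty (U c)]
    (γ : C → ℝ) (hγ : ∀ c, 0 < γ c ∧ γ c < 1)
    (G : (c : C) → U c → ℝ → ℝ → ℝ)
    (hGmono : ∀ (c : C) (d : U c) (x : ℝ), 0 ≤ x →
      MonotoneOn (fun y => G c d x y) (Set.Ici 0))
    (α : C → ℝ) (β : (c : C) → U c → ℝ)
    (hα : ∀ c, 0 ≤ α c) (hαsum : ∑ c, α c = 1)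
    (hβ : ∀ c d, 0 ≤ β c d) (hβsum : ∀ c, ∑ d, β c d = 1 - γ c)
    (z : ℝ) (hz : 0 < z)
    (hbal : ∀ (c : C) (d : U c), α c * G c d (γ c) (β c d) = z) :
    ∀ (α' : C → ℝ) (β' : (c : C) → U c → ℝ),
      (∀ c, 0 ≤ α' c) → (∑ c, α' c = 1) →
      (∀ c d, 0 ≤ β' c d) → (∀ c, ∑ d, β' c d = 1 - γ c) →
      univ.inf' univ_nonempty
          (fun c => α' c * univ.inf' univ_nonempty (fun d => G c d (γ c) (β' c d)))
        ≤ univ.inf' univ_nonempty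
          (fun c => α c * univ.inf' univ_nonempty (fun d => G c d (γ c) (β c d))) := by
  intro α' β' hα' hα'sum hβ' hβ'sum
  -- α c is positive for every c
  have hαpos : ∀ c, 0 < α c := by
    intro c
    rcases lt_or_eq_of_le (hα c) with h | h
    · exact h
    · exfalso
      have := hbal c (Classical.arbitrary (U c))
      rw [← h] at this
      simp at this
      linarith
  -- z ≤ RHS
  have hRHS : z ≤ univ.inf' univ_nonempty
      (fun c => α c * univ.inf' univ_nonempty (fun d => G c d (γ c) (β c d))) := by
    apply Finset.le_inf'
    intro c _
    have hinf : z / α c ≤ univ.inf' univ_nonempty (fun d => G c d (γ c) (β c d)) := by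
      apply Finset.le_inf'
      intro d _
      rw [div_le_iff₀ (hαpos c), mul_comm]
      exact (hbal c d).ge
    calc z = α c * (z / α c) := by rw [mul_comm, div_mul_cancel₀ z (hαpos c).ne']
      _ ≤ _ := by
        exact mul_le_mul_of_nonneg_left hinf (hα c)
  refine le_trans ?_ hRHS
  -- LHS ≤ z, by contradiction
  by_contra hcon
  push_neg at hcon
  have hall : ∀ c, z < α' c * univ.inf' univ_nonempty (fun d => G c d (γ c) (β' c d)) := by
    intro c
    exact lt_of_lt_of_le hcon (Finset.inf'_le _ (mem_univ c))
  -- pick c0 with α' c0 ≤ α c0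
  obtain ⟨c0, hc0⟩ : ∃ c, α' c ≤ α c := by
    by_contra h
    push_neg at h
    have : (∑ c, α c) < ∑ c, α' c :=
      Finset.sum_lt_sum_of_nonempty univ_nonempty (fun c _ => h c)
    rw [hαsum, hα'sum] at this
    exact lt_irrefl _ this
  have hα'pos : 0 < α' c0 := by
    rcases lt_or_eq_of_le (hα' c0) with h | h
    · exact h
    · exfalso
      have := hall c0
      rw [← h] at this
      simp at this
      linarith
  -- for all d, β c0 d < β' c0 d
  have hlt : ∀ d : U c0, β c0 d < β' c0 d := by
    intro d
    have h1 : z < α' c0 * G c0 d (γ c0) (β' c0 d) := by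
      refine lt_of_lt_of_le (hall c0) ?_
      exact mul_le_mul_of_nonneg_left (Finset.inf'_le _ (mem_univ d)) (hα' c0)
    have hG'pos : 0 < G c0 d (γ c0) (β' c0 d) := by
      by_contra h
      push_neg at h
      nlinarith
    have h2 : α c0 * G c0 d (γ c0) (β c0 d) < α c0 * G c0 d (γ c0) (β' c0 d) := by
      calc α c0 * G c0 d (γ c0) (β c0 d) = z := hbal c0 d
        _ < α' c0 * G c0 d (γ c0) (β' c0 d) := h1
        _ ≤ α c0 * G c0 d (γ c0) (β' c0 d) :=
          mul_le_mul_of_nonneg_right hc0 hG'pos.le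
    have h3 : G c0 d (γ c0) (β c0 d) < G c0 d (γ c0) (β' c0 d) :=
      lt_of_mul_lt_mul_left h2 (hα c0)
    by_contra h
    push_neg at h
    exact absurd (hGmono c0 d (γ c0) (hγ c0).1.le (hβ' c0 d) (hβ c0 d) h) (not_le.mpr h3)
  have : (∑ d, β c0 d) < ∑ d, β' c0 d :=
    Finset.sum_lt_sum_of_nonempty univ_nonempty (fun d _ => hlt d)
  rw [hβsum, hβ'sum] at this
  exact lt_irrefl _ this
end

section
/- (Proposition 3, existence of a balanced optimal solution) There exist a feasible solution (α, β) and a real number z > 0 such that α(c)·G_{c,d}(γ(c), β(c, d)) = z for every c ∈ C and every d ∈ U_c, and this (α, β) maximizes V over all feasible solutions. -/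
open Finset

/-- A concave, monotone function on `[0,∞)` that is constant on some nontrivial
interval `[a,b]` stays constant to the right of `a`. -/
private lemma plateau_of_concave {f : ℝ → ℝ} (hconc : ConcaveOn ℝ (Set.Ici 0) f)
    (hmono : MonotoneOn f (Set.Ici 0)) {a b y : ℝ} (ha : 0 ≤ a) (hab : a < b)
    (hfab : f a = f b) (hy : b ≤ y) : f y = f a := by
  have hb : (0:ℝ) ≤ b := le_trans ha hab.le
  have hy0 : (0:ℝ) ≤ y := le_trans hb hy
  rcases eq_or_lt_of_le hy with h | h
  · rw [← h, hfab]
  · have hya : (0:ℝ) < y - a := by linarith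
    set lam := (y - b) / (y - a) with hlamdef
    set mu := (b - a) / (y - a) with hmudef
    have hlam : 0 ≤ lam := div_nonneg (by linarith) hya.le
    have hmu : 0 < mu := div_pos (by linarith) hya
    have hsum : lam + mu = 1 := by
      rw [hlamdef, hmudef, ← add_div]
      field_simp
      ring
    have hcomb : lam * a + mu * y = b := by
      rw [hlamdef, hmudef]
      field_simp
      ring
    have hkey := hconc.2 (Set.mem_Ici.2 ha) (Set.mem_Ici.2 hy0) hlam hmu.le hsum
    rw [smul_eq_mul, smul_eq_mul, smul_eq_mul, smul_eq_mul, hcomb, ← hfab] at hkey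
    -- hkey : lam * f a + mu * f y ≤ f a
    have hexp : lam * f a + mu * f a = f a := by rw [← add_mul, hsum, one_mul]
    have h1 : mu * f y ≤ mu * f a := by linarith [hkey, hexp]
    have h2 : f y ≤ f a := le_of_mul_le_mul_left h1 hmu
    have h3 : f a ≤ f y := by
      rw [hfab]
      exact hmono (Set.mem_Ici.2 hb) (Set.mem_Ici.2 hy0) h.le
    linarith

/-- Within one context: there is a budget allocation equalizing all the `g d`
values at a positive level `t`, and `t` is the maximal achievable min. -/
private lemma aux_context {D : Type*} [Fintype D] [Nonempty D] (g : D → ℝ → ℝ) (S : ℝ)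
    (hS : 0 < S)
    (hcont : ∀ d, ContinuousOn (g d) (Set.Ici 0))
    (hconc : ∀ d, ConcaveOn ℝ (Set.Ici 0) (g d))
    (hmono : ∀ d, MonotoneOn (g d) (Set.Ici 0))
    (hzero : ∀ d, g d 0 = 0)
    (hpos : ∀ d y, 0 < y → 0 < g d y) :
    ∃ (β : D → ℝ) (t : ℝ), (∀ d, 0 ≤ β d) ∧ (∑ d, β d = S) ∧ 0 < t ∧
      (∀ d, g d (β d) = t) ∧
      ∀ β' : D → ℝ, (∀ d, 0 ≤ β' d) → (∑ d, β' d = S) →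
        univ.inf' univ_nonempty (fun d => g d (β' d)) ≤ t := by
  classical
  set K : Set (D → ℝ) := (fun f : D → ℝ => S • f) '' stdSimplex ℝ D with hKdef
  have hmem : ∀ β : D → ℝ, β ∈ K ↔ ((∀ d, 0 ≤ β d) ∧ ∑ d, β d = S) := by
    intro β
    constructor
    · rintro ⟨f, hf, rfl⟩
      refine ⟨fun d => mul_nonneg hS.le (hf.1 d), ?_⟩
      simp only [Pi.smul_apply, smul_eq_mul, ← Finset.mul_sum, hf.2, mul_one]
    · rintro ⟨h1, h2⟩
      refine ⟨S⁻¹ • β, ⟨fun d => mul_nonneg (inv_nonneg.2 hS.le) (h1 d), ?_⟩, ?_⟩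
      · simp only [Pi.smul_apply, smul_eq_mul, ← Finset.mul_sum, h2,
          inv_mul_cancel₀ hS.ne']
      · ext d
        simp only [Pi.smul_apply, smul_eq_mul]
        rw [← mul_assoc, mul_inv_cancel₀ hS.ne', one_mul]
  have hKco : IsCompact K := (isCompact_stdSimplex ℝ D).image (continuous_const_smul S)
  set n : ℕ := Fintype.card D with hndef
  have hn : 0 < n := Fintype.card_pos
  have hn' : (0:ℝ) < (n:ℝ) := Nat.cast_pos.2 hn
  have hunif : (fun _ : D => S / n) ∈ K := by
    rw [hmem]
    refine ⟨fun _ => le_of_lt (div_pos hS hn'), ?_⟩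
    rw [Finset.sum_const, card_univ, ← hndef, nsmul_eq_mul, mul_div_cancel₀ _ hn'.ne']
  have hKne : K.Nonempty := ⟨_, hunif⟩
  set F : (D → ℝ) → ℝ := fun β => univ.inf' univ_nonempty (fun d => g d (β d)) with hFdef
  have hFcont : ContinuousOn F K := by
    apply ContinuousOn.finset_inf'_apply univ_nonempty
    intro d _
    refine (hcont d).comp (continuous_apply d).continuousOn ?_
    intro β hβ
    exact Set.mem_Ici.2 (((hmem β).1 hβ).1 d)
  obtain ⟨B, hBK, hBmax⟩ := hKco.exists_isMaxOn hKne hFcont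
  obtain ⟨hB1, hB2⟩ := (hmem B).1 hBK
  set t : ℝ := F B with htdef
  have hle : ∀ d, t ≤ g d (B d) := fun d => Finset.inf'_le _ (mem_univ d)
  have ht : 0 < t := by
    have h1 : F (fun _ : D => S / n) ≤ t := hBmax hunif
    have h2 : 0 < F (fun _ : D => S / n) := by
      rw [hFdef]
      rw [Finset.lt_inf'_iff]
      exact fun d _ => hpos d _ (div_pos hS hn')
    linarith
  -- intermediate value: find ψ d ∈ [0, B d] with g d (ψ d) = t
  have hψex : ∀ d, ∃ y, y ∈ Set.Icc 0 (B d) ∧ g d y = t := by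
    intro d
    have hsub : Set.Icc (g d 0) (g d (B d)) ⊆ g d '' Set.Icc 0 (B d) :=
      intermediate_value_Icc (hB1 d) ((hcont d).mono (Set.Icc_subset_Ici_self))
    have : t ∈ Set.Icc (g d 0) (g d (B d)) := by
      constructor
      · rw [hzero d]; exact ht.le
      · exact hle d
    obtain ⟨y, hy1, hy2⟩ := hsub this
    exact ⟨y, hy1, hy2⟩
  choose ψ hψmem hψval using hψex
  have hψ0 : ∀ d, 0 ≤ ψ d := fun d => (hψmem d).1
  have hψB : ∀ d, ψ d ≤ B d := fun d => (hψmem d).2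
  have hψsum : ∑ d, ψ d ≤ S := hB2 ▸ Finset.sum_le_sum (fun d _ => hψB d)
  set e : ℝ := S - ∑ d, ψ d with hedef
  have he : 0 ≤ e := by rw [hedef]; linarith
  -- the optimality clause, valid for any β' in K
  have hopt : ∀ β' : D → ℝ, (∀ d, 0 ≤ β' d) → (∑ d, β' d = S) →
      univ.inf' univ_nonempty (fun d => g d (β' d)) ≤ t := by
    intro β' h1 h2
    exact hBmax ((hmem β').2 ⟨h1, h2⟩)
  rcases eq_or_lt_of_le he with he0 | he0
  · -- e = 0 : ψ itself works
    refine ⟨ψ, t, hψ0, by rw [hedef] at he0; linarith, ht, hψval, hopt⟩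
  · -- e > 0 : find a plateauing coordinate d₁ and dump the excess there
    set β'' : D → ℝ := fun d => ψ d + e / n with hβ''def
    have hβ''0 : ∀ d, 0 ≤ β'' d := fun d =>
      add_nonneg (hψ0 d) (le_of_lt (div_pos he0 hn'))
    have hβ''sum : ∑ d, β'' d = S := by
      rw [hβ''def]
      rw [Finset.sum_add_distrib, Finset.sum_const, card_univ, ← hndef, nsmul_eq_mul,
        mul_div_cancel₀ _ hn'.ne', hedef]
      ring
    have hβ''lb : ∀ d, t ≤ g d (β'' d) := by
      intro d
      rw [← hψval d]
      exact hmono d (Set.mem_Ici.2 (hψ0 d)) (Set.mem_Ici.2 (hβ''0 d))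
        (le_add_of_nonneg_right (le_of_lt (div_pos he0 hn')))
    obtain ⟨d₁, -, hd₁⟩ := Finset.exists_mem_eq_inf' (univ_nonempty (α := D))
      (fun d => g d (β'' d))
    have hub : g d₁ (β'' d₁) ≤ t := hd₁ ▸ hopt β'' hβ''0 hβ''sum
    have heq : g d₁ (β'' d₁) = t := le_antisymm hub (hβ''lb d₁)
    -- now g d₁ is constant on [ψ d₁, ∞)
    have hplateau : g d₁ (ψ d₁ + e) = t := by
      have h1 : ψ d₁ < ψ d₁ + e / n := by
        have := div_pos he0 hn'
        linarith
      have h2 : g d₁ (ψ d₁) = g d₁ (ψ d₁ + e / n) := by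
        rw [hψval d₁, ← heq]
      have h3 : ψ d₁ + e / n ≤ ψ d₁ + e := by
        have : e / n ≤ e := div_le_self he0.le (by exact_mod_cast hn)
        linarith
      have := plateau_of_concave (hconc d₁) (hmono d₁) (hψ0 d₁) h1 h2 h3
      rw [this, hψval d₁]
    refine ⟨fun d => ψ d + if d = d₁ then e else 0, t, ?_, ?_, ht, ?_, hopt⟩
    · intro d
      dsimp only
      split <;> [exact add_nonneg (hψ0 d) he0.le; simpa using hψ0 d]
    · dsimp only
      rw [Finset.sum_add_distrib, Finset.sum_ite_eq' univ d₁ (fun _ => e)]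
      simp only [mem_univ, if_true, hedef]
      ring
    · intro d
      dsimp only
      by_cases hd : d = d₁
      · subst hd
        simpa using hplateau
      · simp only [hd, if_false, add_zero]
        exact hψval d

/-- **Proposition 3 (existence of a balanced optimal solution).** There exist a
feasible solution `(α, β)` and `z > 0` with `α(c)·G_{c,d}(γ(c), β(c,d)) = z` for
every context `c` and every `d ∈ U_c`, and this `(α, β)` maximizes the objective
`V(α, β) = min_c α(c)·min_{d ∈ U_c} G_{c,d}(γ(c), β(c,d))` over all feasible
solutions. -/
theorem stmt_4 {C : Type*} [Fintype C] [Nonempty C]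
    {U : C → Type*} [∀ c, Fintype (U c)] [∀ c, Nonempty (U c)]
    (γ : C → ℝ) (hγ : ∀ c, 0 < γ c ∧ γ c < 1)
    (G : (c : C) → U c → ℝ → ℝ → ℝ)
    (hGnonneg : ∀ (c : C) (d : U c) (x y : ℝ), 0 ≤ x → 0 ≤ y → 0 ≤ G c d x y)
    (hGcont : ∀ (c : C) (d : U c),
      ContinuousOn (fun y => G c d (γ c) y) (Set.Ici 0))
    (hGconc : ∀ (c : C) (d : U c),
      ConcaveOn ℝ (Set.Ici (0:ℝ)) (fun y => G c d (γ c) y))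
    (hGmono : ∀ (c : C) (d : U c),
      MonotoneOn (fun y => G c d (γ c) y) (Set.Ici 0))
    (hGzero : ∀ (c : C) (d : U c), G c d (γ c) 0 = 0)
    (hGpos : ∀ (c : C) (d : U c) (y : ℝ), 0 < y → 0 < G c d (γ c) y) :
    ∃ (α : C → ℝ) (β : (c : C) → U c → ℝ) (z : ℝ),
      (∀ c, 0 ≤ α c) ∧ (∑ c, α c = 1) ∧
      (∀ c d, 0 ≤ β c d) ∧ (∀ c, ∑ d, β c d = 1 - γ c) ∧
      0 < z ∧ (∀ (c : C) (d : U c), α c * G c d (γ c) (β c d) = z) ∧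
      (∀ (α' : C → ℝ) (β' : (c : C) → U c → ℝ),
        (∀ c, 0 ≤ α' c) → (∑ c, α' c = 1) →
        (∀ c d, 0 ≤ β' c d) → (∀ c, ∑ d, β' c d = 1 - γ c) →
        univ.inf' univ_nonempty
            (fun c => α' c * univ.inf' univ_nonempty (fun d => G c d (γ c) (β' c d)))
          ≤ univ.inf' univ_nonempty
            (fun c => α c * univ.inf' univ_nonempty (fun d => G c d (γ c) (β c d)))) := by
  classical
  have hctx : ∀ c : C, ∃ (β : U c → ℝ) (t : ℝ), (∀ d, 0 ≤ β d) ∧ (∑ d, β d = 1 - γ c) ∧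
      0 < t ∧ (∀ d, G c d (γ c) (β d) = t) ∧
      ∀ β' : U c → ℝ, (∀ d, 0 ≤ β' d) → (∑ d, β' d = 1 - γ c) →
        univ.inf' univ_nonempty (fun d => G c d (γ c) (β' d)) ≤ t := by
    intro c
    exact aux_context (fun d y => G c d (γ c) y) (1 - γ c) (by linarith [(hγ c).2])
      (hGcont c) (hGconc c) (hGmono c) (hGzero c) (fun d y hy => hGpos c d y hy)
  choose β t hβ0 hβsum ht hval hopt using hctx
  set Z : ℝ := ∑ c, (t c)⁻¹ with hZdef
  have hZ : 0 < Z :=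
    Finset.sum_pos (fun c _ => inv_pos.2 (ht c)) univ_nonempty
  set z : ℝ := Z⁻¹ with hzdef
  have hz : 0 < z := inv_pos.2 hZ
  set α : C → ℝ := fun c => z * (t c)⁻¹ with hαdef
  have hα0 : ∀ c, 0 ≤ α c := fun c => mul_nonneg hz.le (inv_nonneg.2 (ht c).le)
  have hαsum : ∑ c, α c = 1 := by
    rw [hαdef]
    rw [← Finset.mul_sum, ← hZdef, hzdef, inv_mul_cancel₀ hZ.ne']
  have hαt : ∀ c, α c * t c = z := by
    intro c
    rw [hαdef]
    rw [mul_assoc, inv_mul_cancel₀ (ht c).ne', mul_one]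
  have hbal : ∀ (c : C) (d : U c), α c * G c d (γ c) (β c d) = z := by
    intro c d
    rw [hval c d, hαt c]
  refine ⟨α, β, z, hα0, hαsum, hβ0, hβsum, hz, hbal, ?_⟩
  intro α' β' hα'0 hα'sum hβ'0 hβ'sum
  -- the RHS equals z
  have hRHS : univ.inf' univ_nonempty
      (fun c => α c * univ.inf' univ_nonempty (fun d => G c d (γ c) (β c d))) = z := by
    have hterm : ∀ c : C,
        α c * univ.inf' univ_nonempty (fun d => G c d (γ c) (β c d)) = z := by
      intro c
      have : univ.inf' univ_nonempty (fun d => G c d (γ c) (β c d)) = t c := by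
        rw [Finset.inf'_congr univ_nonempty rfl (fun d _ => hval c d)]
        exact Finset.inf'_const _ _
      rw [this, hαt c]
    rw [Finset.inf'_congr univ_nonempty rfl (fun c _ => hterm c)]
    exact Finset.inf'_const _ _
  rw [hRHS]
  -- some coordinate has α' c₀ ≤ α c₀
  have hc₀ : ∃ c₀ : C, α' c₀ ≤ α c₀ := by
    by_contra hcon
    push_neg at hcon
    have := Finset.sum_lt_sum_of_nonempty univ_nonempty (fun c _ => hcon c)
    rw [hαsum, hα'sum] at this
    exact lt_irrefl 1 this
  obtain ⟨c₀, hc₀⟩ := hc₀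
  have hinf_nonneg : 0 ≤ univ.inf' univ_nonempty (fun d => G c₀ d (γ c₀) (β' c₀ d)) :=
    Finset.le_inf' _ _ (fun d _ => hGnonneg c₀ d _ _ (hγ c₀).1.le (hβ'0 c₀ d))
  have step1 : univ.inf' univ_nonempty
      (fun c => α' c * univ.inf' univ_nonempty (fun d => G c d (γ c) (β' c d)))
      ≤ α' c₀ * univ.inf' univ_nonempty (fun d => G c₀ d (γ c₀) (β' c₀ d)) :=
    Finset.inf'_le _ (mem_univ c₀)
  have step2 : α' c₀ * univ.inf' univ_nonempty (fun d => G c₀ d (γ c₀) (β' c₀ d))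
      ≤ α c₀ * t c₀ :=
    mul_le_mul hc₀ (hopt c₀ (β' c₀) (hβ'0 c₀) (hβ'sum c₀)) hinf_nonneg (hα0 c₀)
  linarith [step1, step2, hαt c₀]
end

section
/- (Proposition 5, necessary balance condition for top-m selection) If a feasible solution (α, β) maximizes W over all feasible solutions, then there exists a real number z > 0 such that for every c ∈ C, every d ∈ P_c and every d' ∈ U_c: min_{d̃ ∈ P_c} α(c)·G_{c,d̃,d'}(β(c, d̃), β(c, d')) = z and min_{d̃' ∈ U_c} α(c)·G_{c,d,d̃'}(β(c, d), β(c, d̃')) = z. -/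
open Finset Topology Filter

/-- The objective `W(α, β) = min_c α(c) · min_{(d,d') ∈ P_c × U_c}
G_{c,d,d'}(β(c,d), β(c,d'))` for the contextual top-`m` problem, where the
design set under context `c` is the disjoint union `P c ⊕ U c`. -/
noncomputable def topmObjective {C : Type*} [Fintype C] [Nonempty C]
    {P U : C → Type*} [∀ c, Fintype (P c)] [∀ c, Nonempty (P c)]
    [∀ c, Fintype (U c)] [∀ c, Nonempty (U c)]
    (G : (c : C) → P c → U c → ℝ → ℝ → ℝ)
    (α : C → ℝ) (β : (c : C) → (P c ⊕ U c) → ℝ) : ℝ :=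
  univ.inf' univ_nonempty (fun c =>
    α c * univ.inf' univ_nonempty (fun p : P c × U c =>
      G c p.1 p.2 (β c (Sum.inl p.1)) (β c (Sum.inr p.2))))

lemma aux_shift {C : Type*} [Fintype C] [Nonempty C] (α M : C → ℝ) (W : ℝ)
    (hα : ∀ c, 0 ≤ α c) (hsum : ∑ c, α c = 1)
    (hM : ∀ c, W ≤ α c * M c) (hW : 0 < W)
    (c₀ : C) (h0 : W < α c₀ * M c₀) :
    ∃ α' : C → ℝ, (∀ c, 0 ≤ α' c) ∧ (∑ c, α' c = 1) ∧ ∀ c, W < α' c * M c := by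
  classical
  have hprod : ∀ c, 0 < α c * M c := fun c => lt_of_lt_of_le hW (hM c)
  have hαpos : ∀ c, 0 < α c := by
    intro c
    rcases (hα c).lt_or_eq with h1 | h1
    · exact h1
    · exfalso; have := hprod c; rw [← h1] at this; simp at this
  have hMpos : ∀ c, 0 < M c := by
    intro c
    have := hprod c
    nlinarith [hαpos c]
  set n : ℝ := (Fintype.card C : ℝ) with hn
  have hn1 : (1:ℝ) ≤ n := by
    have := Fintype.card_pos (α := C)
    rw [hn]; exact_mod_cast this
  set D : ℝ := α c₀ * M c₀ - W with hD
  have hDpos : 0 < D := by rw [hD]; linarith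
  set m : ℝ := min (α c₀) (D / M c₀) with hm
  have hmpos : 0 < m := lt_min (hαpos c₀) (div_pos hDpos (hMpos c₀))
  have hm1 : m ≤ α c₀ := min_le_left _ _
  have hm2 : m * M c₀ ≤ D := by
    have : m ≤ D / M c₀ := min_le_right _ _
    exact (le_div_iff₀ (hMpos c₀)).1 this
  set δ : ℝ := m / (2 * n) with hδ
  have hδpos : 0 < δ := div_pos hmpos (by linarith)
  have hnδ : n * δ = m / 2 := by
    rw [hδ]; field_simp
  refine ⟨fun c => α c + δ - (if c = c₀ then n * δ else 0), ?_, ?_, ?_⟩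
  · intro c
    by_cases h : c = c₀
    · subst h; simp only [eq_self_iff_true, if_true]
      linarith [hαpos c, hnδ, hm1, hδpos]
    · simp only [if_neg h]; linarith [hα c]
  · rw [Finset.sum_sub_distrib, Finset.sum_add_distrib, Finset.sum_const,
      Finset.sum_ite_eq' univ c₀ (fun _ => n * δ), if_pos (mem_univ c₀),
      hsum, Finset.card_univ]
    rw [hn]; push_cast; ring
  · intro c
    by_cases h : c = c₀
    · subst h; simp only [eq_self_iff_true, if_true]
      have h1 : (n - 1) * δ * M c ≤ (m / 2) * M c := by
        nlinarith [hMpos c, hδpos]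
      have h2 : (m / 2) * M c ≤ D / 2 := by nlinarith [hMpos c]
      have h3 : (α c + δ - n * δ) * M c = α c * M c - (n - 1) * δ * M c := by ring
      have h4 : D = α c * M c - W := hD
      linarith [h1, h2, h3, hDpos]
    · simp only [if_neg h, sub_zero]
      have h3 : (α c + δ) * M c = α c * M c + δ * M c := by ring
      nlinarith [hM c, hδpos, hMpos c]

lemma key {C : Type*} [Fintype C] [Nonempty C]
    {P U : C → Type*} [∀ c, Fintype (P c)] [∀ c, Nonempty (P c)]
    [∀ c, Fintype (U c)] [∀ c, Nonempty (U c)]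
    (G : (c : C) → P c → U c → ℝ → ℝ → ℝ)
    (hGcont : ∀ (c : C) (d : P c) (d' : U c),
      ContinuousOn (fun p : ℝ × ℝ => G c d d' p.1 p.2) (Set.Ici 0 ×ˢ Set.Ici 0))
    (hGhom : ∀ (c : C) (d : P c) (d' : U c) (h x y : ℝ),
      0 ≤ h → 0 ≤ x → 0 ≤ y → G c d d' (h * x) (h * y) = h * G c d d' x y)
    (α : C → ℝ) (β : (c : C) → (P c ⊕ U c) → ℝ)
    (hα : ∀ c, 0 ≤ α c) (hαsum : ∑ c, α c = 1)
    (hβ : ∀ c d, 0 ≤ β c d) (hβsum : ∀ c, ∑ d, β c d = 1)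
    (hβpos : ∀ c x, 0 < β c x)
    (hopt : ∀ (α' : C → ℝ) (β' : (c : C) → (P c ⊕ U c) → ℝ),
      (∀ c, 0 ≤ α' c) → (∑ c, α' c = 1) →
      (∀ c d, 0 ≤ β' c d) → (∀ c, ∑ d, β' c d = 1) →
      topmObjective G α' β' ≤ topmObjective G α β)
    (hW : 0 < topmObjective G α β)
    (c₀ : C) (x₀ : P c₀ ⊕ U c₀)
    (H : ∀ (d : P c₀) (d' : U c₀), (Sum.inl d = x₀ ∨ Sum.inr d' = x₀) →
      univ.inf' univ_nonempty (fun p : P c₀ × U c₀ =>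
        G c₀ p.1 p.2 (β c₀ (Sum.inl p.1)) (β c₀ (Sum.inr p.2)))
        < G c₀ d d' (β c₀ (Sum.inl d)) (β c₀ (Sum.inr d'))) :
    False := by
  classical
  set W := topmObjective G α β with hWdef
  have hWM : ∀ c, W ≤ α c * univ.inf' univ_nonempty (fun p : P c × U c =>
      G c p.1 p.2 (β c (Sum.inl p.1)) (β c (Sum.inr p.2))) := by
    intro c
    rw [hWdef, topmObjective]
    exact Finset.inf'_le _ (mem_univ c)
  set M : (c : C) → ℝ := fun c => univ.inf' univ_nonempty (fun p : P c × U c =>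
      G c p.1 p.2 (β c (Sum.inl p.1)) (β c (Sum.inr p.2))) with hMdef
  have hprod : ∀ c, 0 < α c * M c := fun c => lt_of_lt_of_le hW (hWM c)
  have hαpos : ∀ c, 0 < α c := by
    intro c
    rcases (hα c).lt_or_eq with h1 | h1
    · exact h1
    · exfalso; have := hprod c; rw [← h1] at this; simp at this
  have hMpos : ∀ c, 0 < M c := by
    intro c; nlinarith [hprod c, hαpos c]
  -- the perturbation
  set pert : ℝ → (P c₀ ⊕ U c₀) → ℝ := fun ε x =>
    if x = x₀ then β c₀ x₀ - ε * (1 - β c₀ x₀) else (1 + ε) * β c₀ x with hpert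
  have hpert0 : ∀ x, pert 0 x = β c₀ x := by
    intro x
    rw [hpert]
    by_cases h : x = x₀ <;> simp [h]
  -- eventual positivity at x₀
  have ha : ∀ᶠ ε in 𝓝 (0:ℝ), 0 < β c₀ x₀ - ε * (1 - β c₀ x₀) := by
    have hc : Continuous (fun ε : ℝ => β c₀ x₀ - ε * (1 - β c₀ x₀)) := by fun_prop
    have h0 : (fun ε : ℝ => β c₀ x₀ - ε * (1 - β c₀ x₀)) 0 = β c₀ x₀ := by simp
    exact (hc.tendsto' 0 (β c₀ x₀) h0).eventually (eventually_gt_nhds (hβpos c₀ x₀))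
  -- eventual strict inequality for each pair
  have hb : ∀ p : P c₀ × U c₀, ∀ᶠ ε in 𝓝[>] (0:ℝ),
      M c₀ < G c₀ p.1 p.2 (pert ε (Sum.inl p.1)) (pert ε (Sum.inr p.2)) := by
    intro p
    by_cases ht : Sum.inl p.1 = x₀ ∨ Sum.inr p.2 = x₀
    · -- touching pair: continuity
      have hc1 : Continuous (fun ε => pert ε (Sum.inl p.1)) := by
        rw [hpert]; by_cases h : (Sum.inl p.1 : P c₀ ⊕ U c₀) = x₀ <;> simp only [h,
          if_true, if_false, eq_self_iff_true] <;> fun_prop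
      have hc2 : Continuous (fun ε => pert ε (Sum.inr p.2)) := by
        rw [hpert]; by_cases h : (Sum.inr p.2 : P c₀ ⊕ U c₀) = x₀ <;> simp only [h,
          if_true, if_false, eq_self_iff_true] <;> fun_prop
      have hq : (β c₀ (Sum.inl p.1), β c₀ (Sum.inr p.2)) ∈
          Set.Ici (0:ℝ) ×ˢ Set.Ici (0:ℝ) := ⟨hβ _ _, hβ _ _⟩
      have hGA : ContinuousAt (fun q : ℝ × ℝ => G c₀ p.1 p.2 q.1 q.2)
          (β c₀ (Sum.inl p.1), β c₀ (Sum.inr p.2)) := by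
        refine (hGcont c₀ p.1 p.2).continuousAt ?_
        exact prod_mem_nhds (Ici_mem_nhds (hβpos _ _)) (Ici_mem_nhds (hβpos _ _))
      have hpath : Filter.Tendsto (fun ε => (pert ε (Sum.inl p.1), pert ε (Sum.inr p.2)))
          (𝓝 0) (𝓝 (β c₀ (Sum.inl p.1), β c₀ (Sum.inr p.2))) := by
        rw [← hpert0 (Sum.inl p.1), ← hpert0 (Sum.inr p.2)]
        exact (hc1.prodMk hc2).continuousAt
      have hT : Filter.Tendsto (fun ε => G c₀ p.1 p.2 (pert ε (Sum.inl p.1))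
          (pert ε (Sum.inr p.2))) (𝓝 0)
          (𝓝 (G c₀ p.1 p.2 (β c₀ (Sum.inl p.1)) (β c₀ (Sum.inr p.2)))) :=
        hGA.tendsto.comp hpath
      have := hT.eventually (eventually_gt_nhds (H p.1 p.2 ht))
      exact this.filter_mono nhdsWithin_le_nhds
    · push_neg at ht
      filter_upwards [self_mem_nhdsWithin] with ε (hε : ε ∈ Set.Ioi (0:ℝ))
      have hε' : (0:ℝ) < ε := hε
      have e1 : pert ε (Sum.inl p.1) = (1 + ε) * β c₀ (Sum.inl p.1) := by
        rw [hpert]; simp [ht.1]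
      have e2 : pert ε (Sum.inr p.2) = (1 + ε) * β c₀ (Sum.inr p.2) := by
        rw [hpert]; simp [ht.2]
      rw [e1, e2, hGhom c₀ p.1 p.2 (1 + ε) _ _ (by linarith) (hβ _ _) (hβ _ _)]
      have hle : M c₀ ≤ G c₀ p.1 p.2 (β c₀ (Sum.inl p.1)) (β c₀ (Sum.inr p.2)) := by
        rw [hMdef]; exact Finset.inf'_le _ (mem_univ p)
      nlinarith [hMpos c₀]
  have hball : ∀ᶠ ε in 𝓝[>] (0:ℝ), ∀ p : P c₀ × U c₀,
      M c₀ < G c₀ p.1 p.2 (pert ε (Sum.inl p.1)) (pert ε (Sum.inr p.2)) :=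
    Filter.eventually_all.2 hb
  obtain ⟨ε, hball', haε, hε⟩ :=
    (hball.and ((ha.filter_mono nhdsWithin_le_nhds).and self_mem_nhdsWithin)).exists
  have hεpos : (0:ℝ) < ε := hε
  -- the new β
  set β'' : (c : C) → (P c ⊕ U c) → ℝ := Function.update β c₀ (pert ε) with hβ''
  have hβ''eq : ∀ c, c ≠ c₀ → β'' c = β c := by
    intro c hc; rw [hβ'']; exact Function.update_of_ne hc _ _
  have hβ''c₀ : β'' c₀ = pert ε := by rw [hβ'']; exact Function.update_self _ _ _
  have hβ''nonneg : ∀ c x, 0 ≤ β'' c x := by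
    intro c x
    by_cases h : c = c₀
    · subst h; rw [hβ''c₀, hpert]
      by_cases hx : x = x₀
      · simp only [hx, if_true, eq_self_iff_true]; linarith
      · simp only [hx, if_false]
        exact mul_nonneg (by linarith) (hβ _ _)
    · rw [hβ''eq c h]; exact hβ c x
  have hβ''sum : ∀ c, ∑ x, β'' c x = 1 := by
    intro c
    by_cases h : c = c₀
    · have h' := h.symm; subst h'
      rw [hβ''c₀]
      have key1 : β c₀ x₀ + ∑ x ∈ univ.erase x₀, β c₀ x = 1 := by
        rw [Finset.add_sum_erase univ (β c₀) (mem_univ x₀)]; exact hβsum c₀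
      rw [← Finset.add_sum_erase univ (pert ε) (mem_univ x₀)]
      have e0 : pert ε x₀ = β c₀ x₀ - ε * (1 - β c₀ x₀) := by rw [hpert]; simp
      have e1 : ∑ x ∈ univ.erase x₀, pert ε x = (1 + ε) * ∑ x ∈ univ.erase x₀, β c₀ x := by
        rw [Finset.mul_sum]
        refine Finset.sum_congr rfl (fun x hx => ?_)
        rw [hpert]; simp [Finset.ne_of_mem_erase hx]
      rw [e0, e1]
      nlinarith [key1]
    · rw [hβ''eq c h]; exact hβsum c
  -- new inner minima
  have hstrict : W < α c₀ * univ.inf' univ_nonempty (fun p : P c₀ × U c₀ =>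
      G c₀ p.1 p.2 (β'' c₀ (Sum.inl p.1)) (β'' c₀ (Sum.inr p.2))) := by
    have hlt : M c₀ < univ.inf' univ_nonempty (fun p : P c₀ × U c₀ =>
        G c₀ p.1 p.2 (β'' c₀ (Sum.inl p.1)) (β'' c₀ (Sum.inr p.2))) := by
      rw [Finset.lt_inf'_iff]
      intro p _
      rw [hβ''c₀]
      exact hball' p
    calc W ≤ α c₀ * M c₀ := hWM c₀
      _ < _ := by nlinarith [hαpos c₀]
  have hM'' : ∀ c, W ≤ α c * univ.inf' univ_nonempty (fun p : P c × U c =>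
      G c p.1 p.2 (β'' c (Sum.inl p.1)) (β'' c (Sum.inr p.2))) := by
    intro c
    by_cases h : c = c₀
    · have h' := h.symm
      subst h'
      exact hstrict.le
    · have : β'' c = β c := hβ''eq c h
      rw [this]; exact hWM c
  obtain ⟨α', hα'0, hα'sum, hα'⟩ := aux_shift α
    (fun c => univ.inf' univ_nonempty (fun p : P c × U c =>
      G c p.1 p.2 (β'' c (Sum.inl p.1)) (β'' c (Sum.inr p.2)))) W hα hαsum hM'' hW c₀ hstrict
  have hgt : W < topmObjective G α' β'' := by
    rw [topmObjective, Finset.lt_inf'_iff]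
    intro c _
    exact hα' c
  have hle := hopt α' β'' hα'0 hα'sum hβ''nonneg hβ''sum
  linarith

/-- **Proposition 5 (necessary balance condition for top-`m` selection).**
If a feasible `(α, β)` maximizes `W`, then there is `z > 0` such that for every
context `c`, every `d ∈ P_c` and every `d' ∈ U_c`:
`min_{d̃ ∈ P_c} α(c)·G_{c,d̃,d'}(β(c,d̃), β(c,d')) = z` and
`min_{d̃' ∈ U_c} α(c)·G_{c,d,d̃'}(β(c,d), β(c,d̃')) = z`. -/
theorem stmt_6 {C : Type*} [Fintype C] [Nonempty C]
    {P U : C → Type*} [∀ c, Fintype (P c)] [∀ c, Nonempty (P c)]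
    [∀ c, Fintype (U c)] [∀ c, Nonempty (U c)]
    (G : (c : C) → P c → U c → ℝ → ℝ → ℝ)
    (hGconc : ∀ (c : C) (d : P c) (d' : U c),
      ConcaveOn ℝ (Set.Ici (0:ℝ) ×ˢ Set.Ici (0:ℝ)) (fun p : ℝ × ℝ => G c d d' p.1 p.2))
    (hGcont : ∀ (c : C) (d : P c) (d' : U c),
      ContinuousOn (fun p : ℝ × ℝ => G c d d' p.1 p.2) (Set.Ici 0 ×ˢ Set.Ici 0))
    (hGmono1 : ∀ (c : C) (d : P c) (d' : U c) (y : ℝ), 0 ≤ y →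
      MonotoneOn (fun x => G c d d' x y) (Set.Ici 0))
    (hGmono2 : ∀ (c : C) (d : P c) (d' : U c) (x : ℝ), 0 ≤ x →
      MonotoneOn (fun y => G c d d' x y) (Set.Ici 0))
    (hGhom : ∀ (c : C) (d : P c) (d' : U c) (h x y : ℝ),
      0 ≤ h → 0 ≤ x → 0 ≤ y → G c d d' (h * x) (h * y) = h * G c d d' x y)
    (hGzero1 : ∀ (c : C) (d : P c) (d' : U c) (y : ℝ), 0 ≤ y → G c d d' 0 y = 0)
    (hGzero2 : ∀ (c : C) (d : P c) (d' : U c) (x : ℝ), 0 ≤ x → G c d d' x 0 = 0)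
    (hGpos : ∀ (c : C) (d : P c) (d' : U c) (x y : ℝ), 0 < x → 0 < y →
      0 < G c d d' x y)
    (α : C → ℝ) (β : (c : C) → (P c ⊕ U c) → ℝ)
    (hα : ∀ c, 0 ≤ α c) (hαsum : ∑ c, α c = 1)
    (hβ : ∀ c d, 0 ≤ β c d) (hβsum : ∀ c, ∑ d, β c d = 1)
    (hopt : ∀ (α' : C → ℝ) (β' : (c : C) → (P c ⊕ U c) → ℝ),
      (∀ c, 0 ≤ α' c) → (∑ c, α' c = 1) →
      (∀ c d, 0 ≤ β' c d) → (∀ c, ∑ d, β' c d = 1) →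
      topmObjective G α' β' ≤ topmObjective G α β) :
    ∃ z : ℝ, 0 < z ∧
      ∀ (c : C) (d : P c) (d' : U c),
        (univ.inf' univ_nonempty
          (fun dt : P c => α c * G c dt d' (β c (Sum.inl dt)) (β c (Sum.inr d'))) = z) ∧
        (univ.inf' univ_nonempty
          (fun dt' : U c => α c * G c d dt' (β c (Sum.inl d)) (β c (Sum.inr dt'))) = z) := by
  classical
  -- a uniform feasible solution has positive objective
  have hcardC : (0:ℝ) < (Fintype.card C : ℝ) := by exact_mod_cast Fintype.card_pos
  have hcardD : ∀ c : C, (0:ℝ) < (Fintype.card (P c ⊕ U c) : ℝ) := fun c => by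
    exact_mod_cast Fintype.card_pos
  set α₀ : C → ℝ := fun _ => (Fintype.card C : ℝ)⁻¹ with hα₀
  set β₀ : (c : C) → (P c ⊕ U c) → ℝ := fun c _ => (Fintype.card (P c ⊕ U c) : ℝ)⁻¹ with hβ₀
  have hα₀sum : ∑ c, α₀ c = 1 := by
    rw [hα₀, Finset.sum_const, Finset.card_univ, nsmul_eq_mul]
    field_simp
  have hβ₀sum : ∀ c, ∑ x, β₀ c x = 1 := by
    intro c
    rw [hβ₀, Finset.sum_const, Finset.card_univ, nsmul_eq_mul]
    field_simp
  have hpos0 : 0 < topmObjective G α₀ β₀ := by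
    rw [topmObjective, Finset.lt_inf'_iff]
    intro c _
    refine mul_pos (inv_pos.2 hcardC) ?_
    rw [Finset.lt_inf'_iff]
    intro p _
    exact hGpos c p.1 p.2 _ _ (inv_pos.2 (hcardD c)) (inv_pos.2 (hcardD c))
  set W := topmObjective G α β with hWdef
  have hW : 0 < W :=
    lt_of_lt_of_le hpos0 (hopt α₀ β₀ (fun c => (inv_pos.2 hcardC).le) hα₀sum
      (fun c x => (inv_pos.2 (hcardD c)).le) hβ₀sum)
  have hWM : ∀ c, W ≤ α c * univ.inf' univ_nonempty (fun p : P c × U c =>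
      G c p.1 p.2 (β c (Sum.inl p.1)) (β c (Sum.inr p.2))) := by
    intro c
    rw [hWdef, topmObjective]
    exact Finset.inf'_le _ (mem_univ c)
  set M : (c : C) → ℝ := fun c => univ.inf' univ_nonempty (fun p : P c × U c =>
      G c p.1 p.2 (β c (Sum.inl p.1)) (β c (Sum.inr p.2))) with hMdef
  have hprod : ∀ c, 0 < α c * M c := fun c => lt_of_lt_of_le hW (hWM c)
  have hαpos : ∀ c, 0 < α c := by
    intro c
    rcases (hα c).lt_or_eq with h1 | h1
    · exact h1
    · exfalso; have := hprod c; rw [← h1] at this; simp at this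
  have hMpos : ∀ c, 0 < M c := by
    intro c; nlinarith [hprod c, hαpos c]
  have hβpos : ∀ c x, 0 < β c x := by
    intro c x
    rcases (hβ c x).lt_or_eq with h1 | h1
    · exact h1
    · exfalso
      cases x with
      | inl d =>
        obtain ⟨d'⟩ : Nonempty (U c) := inferInstance
        have hle : M c ≤ G c d d' (β c (Sum.inl d)) (β c (Sum.inr d')) := by
          rw [hMdef]; exact Finset.inf'_le _ (mem_univ (d, d'))
        rw [← h1, hGzero1 c d d' _ (hβ c (Sum.inr d'))] at hle
        exact absurd hle (not_le.2 (hMpos c))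
      | inr d' =>
        obtain ⟨d⟩ : Nonempty (P c) := inferInstance
        have hle : M c ≤ G c d d' (β c (Sum.inl d)) (β c (Sum.inr d')) := by
          rw [hMdef]; exact Finset.inf'_le _ (mem_univ (d, d'))
        rw [← h1, hGzero2 c d d' _ (hβ c (Sum.inl d))] at hle
        exact absurd hle (not_le.2 (hMpos c))
  refine ⟨W, hW, fun c d d' => ⟨?_, ?_⟩⟩
  · -- column balance
    refine le_antisymm ?_ ?_
    · by_contra hcon
      push_neg at hcon
      refine key G hGcont hGhom α β hα hαsum hβ hβsum hβpos hopt hW c (Sum.inr d') ?_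
      intro d₁ d₁' hd
      rcases hd with hd | hd
      · exact absurd hd (by simp)
      · have hdd : d' = d₁' := (by injection hd : d₁' = d').symm
        subst hdd
        have hle2 : α c * M c ≤ W := by
          rcases lt_or_ge W (α c * M c) with hlt | hle2
          · exfalso
            obtain ⟨α', h1, h2, h3⟩ := aux_shift α M W hα hαsum hWM hW c hlt
            have hgt : W < topmObjective G α' β := by
              rw [topmObjective, Finset.lt_inf'_iff]
              exact fun c' _ => h3 c'
            have := hopt α' β h1 h2 hβ hβsum
            linarith
          · exact hle2
        have h1 : univ.inf' univ_nonempty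
            (fun dt : P c => α c * G c dt d' (β c (Sum.inl dt)) (β c (Sum.inr d')))
            ≤ α c * G c d₁ d' (β c (Sum.inl d₁)) (β c (Sum.inr d')) :=
          Finset.inf'_le _ (mem_univ d₁)
        have h2 : α c * M c < α c * G c d₁ d' (β c (Sum.inl d₁)) (β c (Sum.inr d')) :=
          lt_of_le_of_lt hle2 (lt_of_lt_of_le hcon h1)
        exact lt_of_mul_lt_mul_left h2 (hα c)
    · refine Finset.le_inf' _ _ (fun dt _ => ?_)
      calc W ≤ α c * M c := hWM c
        _ ≤ α c * G c dt d' (β c (Sum.inl dt)) (β c (Sum.inr d')) := by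
          refine mul_le_mul_of_nonneg_left ?_ (hα c)
          rw [hMdef]
          exact Finset.inf'_le _ (mem_univ (dt, d'))
  · -- row balance
    refine le_antisymm ?_ ?_
    · by_contra hcon
      push_neg at hcon
      refine key G hGcont hGhom α β hα hαsum hβ hβsum hβpos hopt hW c (Sum.inl d) ?_
      intro d₁ d₁' hd
      rcases hd with hd | hd
      · have hdd : d = d₁ := (by injection hd : d₁ = d).symm
        subst hdd
        have hle2 : α c * M c ≤ W := by
          rcases lt_or_ge W (α c * M c) with hlt | hle2
          · exfalso
            obtain ⟨α', h1, h2, h3⟩ := aux_shift α M W hα hαsum hWM hW c hlt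
            have hgt : W < topmObjective G α' β := by
              rw [topmObjective, Finset.lt_inf'_iff]
              exact fun c' _ => h3 c'
            have := hopt α' β h1 h2 hβ hβsum
            linarith
          · exact hle2
        have h1 : univ.inf' univ_nonempty
            (fun dt' : U c => α c * G c d dt' (β c (Sum.inl d)) (β c (Sum.inr dt')))
            ≤ α c * G c d d₁' (β c (Sum.inl d)) (β c (Sum.inr d₁')) :=
          Finset.inf'_le _ (mem_univ d₁')
        have h2 : α c * M c < α c * G c d d₁' (β c (Sum.inl d)) (β c (Sum.inr d₁')) :=
          lt_of_le_of_lt hle2 (lt_of_lt_of_le hcon h1)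
        exact lt_of_mul_lt_mul_left h2 (hα c)
      · exact absurd hd (by simp)
    · refine Finset.le_inf' _ _ (fun dt' _ => ?_)
      calc W ≤ α c * M c := hWM c
        _ ≤ α c * G c d dt' (β c (Sum.inl d)) (β c (Sum.inr dt')) := by
          refine mul_le_mul_of_nonneg_left ?_ (hα c)
          rw [hMdef]
          exact Finset.inf'_le _ (mem_univ (d, dt'))
end

section
/- (Proposition 6, necessary optimality conditions for Gaussian designs) Suppose ψ : D → [0,∞) with Σ_{d ∈ D} ψ(d) = 1 maximizes ψ ↦ min_{(d,d') ∈ P × U} G_{d,d'}(ψ(d), ψ(d')) over all such ψ. Then there exist z > 0 and a type vector ϑ : P × U → {0,1} such that: (i) for every d ∈ P there exists d' ∈ U with ϑ(d, d') = 1, and for every d' ∈ U there exists d ∈ P with ϑ(d, d') = 1; (ii) for all (d, d') ∈ P × U, G_{d,d'}(ψ(d), ψ(d')) ≥ z, with equality if and only if ϑ(d, d') = 1; and (iii) for every equivalence class E of the smallest equivalence relation on D containing all pairs {d, d'} with ϑ(d, d') = 1, one has Σ_{d ∈ P ∩ E} (ψ(d)/σ(d))² = Σ_{d' ∈ U ∩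 E} (ψ(d')/σ(d'))². -/
open Finset Classical

private lemma auxGalt (c a b x y : ℝ) (ha : 0 < a) (hb : 0 < b) (hx : 0 < x) (hy : 0 < y) :
    c * x * y / (a * y + b * x) = c / (a / x + b / y) := by
  rw [div_eq_div_iff (by positivity) (by positivity)]
  field_simp

private lemma auxMono (c a b : ℝ) (hc : 0 < c) (ha : 0 < a) (hb : 0 < b)
    {x y x' y' : ℝ} (hx : 0 < x) (hy : 0 < y) (hx' : 0 < x') (hy' : 0 < y')
    (h : a / x' + b / y' < a / x + b / y) :
    c * x * y / (a * y + b * x) < c * x' * y' / (a * y' + b * x') := by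
  rw [auxGalt c a b x y ha hb hx hy, auxGalt c a b x' y' ha hb hx' hy']
  exact div_lt_div_of_pos_left hc (by positivity) h

private lemma auxStep (c aa bb x y x' y' t p q : ℝ)
    (hc : 0 < c) (haa : 0 < aa) (hbb : 0 < bb)
    (hx : 0 < x) (hy : 0 < y) (hx' : 0 < x') (hy' : 0 < y')
    (hxdef : aa * x' = aa * x + t * p * x^2)
    (hydef : bb * y' = bb * y - t * q * y^2)
    (hnum : 0 < t * (p * x * y' - q * y * x')) :
    c * x * y / (aa * y + bb * x) < c * x' * y' / (aa * y' + bb * x') := by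
  have hx'ne := hx'.ne'
  have hy'ne := hy'.ne'
  refine auxMono c aa bb hc haa hbb hx hy hx' hy' ?_
  have e1 : aa / x - aa / x' = t * p * x / x' := by
    rw [div_sub_div _ _ hx.ne' hx'.ne', div_eq_div_iff (by positivity) hx'.ne']
    linear_combination x' * hxdef
  have e2 : bb / y' - bb / y = t * q * y / y' := by
    rw [div_sub_div _ _ hy'.ne' hy.ne', div_eq_div_iff (by positivity) hy'.ne']
    linear_combination (-y') * hydef
  have e3 : t * p * x / x' - t * q * y / y' = t * (p * x * y' - q * y * x') / (x' * y') := by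
    field_simp
  have hD : 0 < t * (p * x * y' - q * y * x') / (x' * y') := div_pos hnum (by positivity)
  linarith

private lemma auxCont (c a b X Y α β : ℝ) (h : a * Y + b * X ≠ 0) :
    ContinuousAt (fun t : ℝ => c * (X + t * α) * (Y + t * β) / (a * (Y + t * β) + b * (X + t * α))) 0 := by
  apply ContinuousAt.div (by fun_prop) (by fun_prop)
  simpa using h

private lemma auxEv {f : ℝ → ℝ} (hf : ContinuousAt f 0) {z : ℝ} (h : z < f 0) :
    ∀ᶠ t in nhdsWithin (0:ℝ) (Set.Ioi 0), z < f t :=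
  ((continuousAt_const.eventually_lt hf h).filter_mono nhdsWithin_le_nhds)


/-- **Proposition 6 (necessary optimality conditions for Gaussian designs).**
If `ψ` on the simplex maximizes `ψ ↦ min_{(d,d') ∈ P × U} G_{d,d'}(ψ(d), ψ(d'))`,
where `G_{d,d'}` is the Gaussian known-variance rate function, then there exist
`z > 0` and a type vector `ϑ : P × U → {0,1}` such that: (i) every row and column
of `ϑ` contains a 1; (ii) `G_{d,d'}(ψ(d), ψ(d')) ≥ z` with equality iff
`ϑ(d,d') = 1`; and (iii) in each equivalence class of the smallest equivalence
relation generated by the pairs with `ϑ(d,d') = 1`, the sums of `(ψ/σ)²` over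
the class's members in `P` and in `U` coincide. -/
theorem stmt_7 {P U : Type*} [Fintype P] [Nonempty P] [Fintype U] [Nonempty U]
    (μ : P ⊕ U → ℝ) (σ : P ⊕ U → ℝ)
    (hμ : ∀ (d : P) (d' : U), μ (Sum.inr d') < μ (Sum.inl d))
    (hσ : ∀ a, 0 < σ a)
    (G : P → U → ℝ → ℝ → ℝ)
    (hGdef : ∀ (d : P) (d' : U) (x y : ℝ), G d d' x y =
      (μ (Sum.inl d) - μ (Sum.inr d'))^2 * x * y /
        (σ (Sum.inl d)^2 * y + σ (Sum.inr d')^2 * x))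
    (ψ : P ⊕ U → ℝ) (hψ0 : ∀ a, 0 ≤ ψ a) (hψ1 : ∑ a, ψ a = 1)
    (hopt : ∀ ψ' : P ⊕ U → ℝ, (∀ a, 0 ≤ ψ' a) → (∑ a, ψ' a = 1) →
      univ.inf' univ_nonempty
          (fun p : P × U => G p.1 p.2 (ψ' (Sum.inl p.1)) (ψ' (Sum.inr p.2)))
        ≤ univ.inf' univ_nonempty
          (fun p : P × U => G p.1 p.2 (ψ (Sum.inl p.1)) (ψ (Sum.inr p.2)))) :
    ∃ (z : ℝ) (ϑ : P → U → Bool), 0 < z ∧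
      (∀ d : P, ∃ d' : U, ϑ d d' = true) ∧
      (∀ d' : U, ∃ d : P, ϑ d d' = true) ∧
      (∀ (d : P) (d' : U),
        z ≤ G d d' (ψ (Sum.inl d)) (ψ (Sum.inr d')) ∧
        (G d d' (ψ (Sum.inl d)) (ψ (Sum.inr d')) = z ↔ ϑ d d' = true)) ∧
      (∀ a : P ⊕ U,
        (∑ d : P,
          if Relation.EqvGen (fun u v : P ⊕ U =>
              ∃ (i : P) (j : U), ϑ i j = true ∧ u = Sum.inl i ∧ v = Sum.inr j)
            a (Sum.inl d)
          then (ψ (Sum.inl d) / σ (Sum.inl d))^2 else 0)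
        =
        (∑ d' : U,
          if Relation.EqvGen (fun u v : P ⊕ U =>
              ∃ (i : P) (j : U), ϑ i j = true ∧ u = Sum.inl i ∧ v = Sum.inr j)
            a (Sum.inr d')
          then (ψ (Sum.inr d') / σ (Sum.inr d'))^2 else 0)) := by
  classical
  set Z : ℝ := univ.inf' univ_nonempty
      (fun p : P × U => G p.1 p.2 (ψ (Sum.inl p.1)) (ψ (Sum.inr p.2))) with hZdef
  -- basic positivity data
  have hc : ∀ (d : P) (d' : U), 0 < (μ (Sum.inl d) - μ (Sum.inr d'))^2 := fun d d' =>
    pow_pos (sub_pos.2 (hμ d d')) 2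
  have ha : ∀ e : P ⊕ U, 0 < σ e ^ 2 := fun e => by have := hσ e; positivity
  have hZle : ∀ p : P × U, Z ≤ G p.1 p.2 (ψ (Sum.inl p.1)) (ψ (Sum.inr p.2)) :=
    fun p => Finset.inf'_le _ (mem_univ p)
  -- Z > 0, by comparing with the uniform design
  have hZpos : 0 < Z := by
    set N : ℕ := Fintype.card (P ⊕ U) with hN
    have hNpos : 0 < N := Fintype.card_pos
    have h1 : (∑ _a : P ⊕ U, (N:ℝ)⁻¹) = 1 := by
      have hNne : (N:ℝ) ≠ 0 := Nat.cast_ne_zero.2 hNpos.ne'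
      rw [Finset.sum_const, card_univ, nsmul_eq_mul, mul_inv_cancel₀ hNne]
    have h2 := hopt (fun _ => (N:ℝ)⁻¹) (fun _ => by positivity) h1
    refine lt_of_lt_of_le ?_ h2
    rw [Finset.lt_inf'_iff]
    intro p _
    rw [hGdef]
    have := hc p.1 p.2
    have := ha (Sum.inl p.1)
    have := ha (Sum.inr p.2)
    have hNR : (0:ℝ) < (N:ℝ)⁻¹ := by positivity
    positivity
  -- all coordinates of ψ are positive
  have hψpos : ∀ e, 0 < ψ e := by
    intro e
    rcases (hψ0 e).lt_or_eq with h | h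
    · exact h
    exfalso
    cases e with
    | inl d =>
      obtain ⟨d'⟩ := (inferInstance : Nonempty U)
      have h2 := hZle (d, d')
      rw [hGdef, ← h] at h2
      simp at h2
      exact absurd h2 (not_le.2 hZpos)
    | inr d' =>
      obtain ⟨d⟩ := (inferInstance : Nonempty P)
      have h2 := hZle (d, d')
      rw [hGdef, ← h] at h2
      simp at h2
      exact absurd h2 (not_le.2 hZpos)
  -- the generic perturbation principle
  have key : ∀ η : P ⊕ U → ℝ, (∑ e, η e) = 0 →
      (∀ p : P × U, G p.1 p.2 (ψ (Sum.inl p.1)) (ψ (Sum.inr p.2)) = Z →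
        ∀ᶠ t in nhdsWithin (0:ℝ) (Set.Ioi 0),
          Z < G p.1 p.2 (ψ (Sum.inl p.1) + t * η (Sum.inl p.1))
              (ψ (Sum.inr p.2) + t * η (Sum.inr p.2))) → False := by
    intro η hsum htight
    have hposEv : ∀ᶠ t in nhdsWithin (0:ℝ) (Set.Ioi 0), ∀ e, 0 < ψ e + t * η e := by
      refine Filter.eventually_all.2 fun e => ?_
      refine Filter.Eventually.filter_mono nhdsWithin_le_nhds ?_
      have hcont : ContinuousAt (fun t : ℝ => ψ e + t * η e) 0 := by fun_prop
      have h0 : (0:ℝ) < ψ e + 0 * η e := by simpa using hψpos e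
      exact continuousAt_const.eventually_lt hcont h0
    have hallEv : ∀ᶠ t in nhdsWithin (0:ℝ) (Set.Ioi 0), ∀ p : P × U,
        Z < G p.1 p.2 (ψ (Sum.inl p.1) + t * η (Sum.inl p.1))
            (ψ (Sum.inr p.2) + t * η (Sum.inr p.2)) := by
      refine Filter.eventually_all.2 fun p => ?_
      by_cases hp : G p.1 p.2 (ψ (Sum.inl p.1)) (ψ (Sum.inr p.2)) = Z
      · exact htight p hp
      · have hlt : Z < G p.1 p.2 (ψ (Sum.inl p.1)) (ψ (Sum.inr p.2)) :=
          lt_of_le_of_ne (hZle p) (Ne.symm hp)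
        have hcont := auxCont ((μ (Sum.inl p.1) - μ (Sum.inr p.2))^2)
          (σ (Sum.inl p.1)^2) (σ (Sum.inr p.2)^2) (ψ (Sum.inl p.1)) (ψ (Sum.inr p.2))
          (η (Sum.inl p.1)) (η (Sum.inr p.2))
          (by have := ha (Sum.inl p.1); have := ha (Sum.inr p.2)
              have := hψpos (Sum.inl p.1); have := hψpos (Sum.inr p.2); positivity)
        have := auxEv hcont (z := Z) (by simpa [← hGdef] using hlt)
        simpa [← hGdef] using this
    obtain ⟨t, hall, hpos⟩ := (hallEv.and hposEv).exists
    have hsum1 : (∑ e, (ψ e + t * η e)) = 1 := by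
      rw [Finset.sum_add_distrib, hψ1, ← Finset.mul_sum, hsum, mul_zero, add_zero]
    have h2 := hopt (fun e => ψ e + t * η e) (fun e => (hpos e).le) hsum1
    have h3 : Z < univ.inf' univ_nonempty
        (fun p : P × U => G p.1 p.2 (ψ (Sum.inl p.1) + t * η (Sum.inl p.1))
          (ψ (Sum.inr p.2) + t * η (Sum.inr p.2))) := by
      rw [Finset.lt_inf'_iff]; exact fun p _ => hall p
    exact absurd (h2.trans_lt h3) (lt_irrefl _)
  -- every row contains a tight pair
  set N : ℕ := Fintype.card (P ⊕ U) with hN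
  have hN2 : 2 ≤ N := by
    rw [hN, Fintype.card_sum]
    have h1 := Fintype.card_pos (α := P)
    have h2 := Fintype.card_pos (α := U)
    omega
  have hNR : (1:ℝ) ≤ (N:ℝ) - 1 := by
    have : (2:ℝ) ≤ (N:ℝ) := by exact_mod_cast hN2
    linarith
  set cst : ℝ := ((N:ℝ) - 1)⁻¹ with hcst
  have hcpos : (0:ℝ) < cst := by rw [hcst]; positivity
  have hsumN : ∀ e0 : P ⊕ U, (∑ e, (if e = e0 then (-1:ℝ) else cst)) = 0 := by
    intro e0
    have h1 : ∀ e : P ⊕ U, (if e = e0 then (-1:ℝ) else cst)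
        = cst + (if e = e0 then (-1 - cst) else 0) := by
      intro e; by_cases h : e = e0 <;> simp [h]
    rw [Finset.sum_congr rfl (fun e _ => h1 e), Finset.sum_add_distrib, Finset.sum_const,
      Finset.sum_ite_eq' univ e0, if_pos (mem_univ _), card_univ, nsmul_eq_mul]
    have hne : (N:ℝ) - 1 ≠ 0 := by linarith
    rw [hcst]
    field_simp
    rw [hN, Fintype.card_sum]
    push_cast
    ring
  have incmove : ∀ (d1 : P) (d1' : U) (c1 c2 : ℝ), 0 < c1 → 0 < c2 →
      G d1 d1' (ψ (Sum.inl d1)) (ψ (Sum.inr d1')) = Z →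
      ∀ᶠ t in nhdsWithin (0:ℝ) (Set.Ioi 0),
        Z < G d1 d1' (ψ (Sum.inl d1) + t * c1) (ψ (Sum.inr d1') + t * c2) := by
    intro d1 d1' c1 c2 hc1 hc2 hp
    filter_upwards [eventually_mem_nhdsWithin] with t ht
    have htc1 : 0 < t * c1 := mul_pos ht hc1
    have htc2 : 0 < t * c2 := mul_pos ht hc2
    have hX := hψpos (Sum.inl d1)
    have hY := hψpos (Sum.inr d1')
    have hap := ha (Sum.inl d1)
    have hbp := ha (Sum.inr d1')
    rw [← hp, hGdef, hGdef]
    refine auxMono _ _ _ (hc d1 d1') hap hbp hX hY (by linarith) (by linarith) ?_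
    have h1 : σ (Sum.inl d1) ^ 2 / (ψ (Sum.inl d1) + t * c1) < σ (Sum.inl d1) ^ 2 / ψ (Sum.inl d1) :=
      div_lt_div_of_pos_left hap hX (by linarith)
    have h2 : σ (Sum.inr d1') ^ 2 / (ψ (Sum.inr d1') + t * c2) < σ (Sum.inr d1') ^ 2 / ψ (Sum.inr d1') :=
      div_lt_div_of_pos_left hbp hY (by linarith)
    linarith
  have tightmove : ∀ (e0 : P ⊕ U) (d1 : P) (d1' : U),
      (Sum.inl d1 : P ⊕ U) ≠ e0 → (Sum.inr d1' : P ⊕ U) ≠ e0 →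
      G d1 d1' (ψ (Sum.inl d1)) (ψ (Sum.inr d1')) = Z →
      ∀ᶠ t in nhdsWithin (0:ℝ) (Set.Ioi 0),
        Z < G d1 d1'
          (ψ (Sum.inl d1) + t * (if (Sum.inl d1 : P ⊕ U) = e0 then (-1:ℝ) else cst))
          (ψ (Sum.inr d1') + t * (if (Sum.inr d1' : P ⊕ U) = e0 then (-1:ℝ) else cst)) := by
    intro e0 d1 d1' hne1 hne2 hp
    rw [if_neg hne1, if_neg hne2]
    exact incmove d1 d1' cst cst hcpos hcpos hp
  have rowC : ∀ d0 : P, ∃ d' : U, G d0 d' (ψ (Sum.inl d0)) (ψ (Sum.inr d')) = Z := by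
    intro d0
    by_contra hcon
    push_neg at hcon
    have hgt : ∀ d', Z < G d0 d' (ψ (Sum.inl d0)) (ψ (Sum.inr d')) :=
      fun d' => lt_of_le_of_ne (hZle (d0, d')) (Ne.symm (hcon d'))
    refine key (fun e => if e = Sum.inl d0 then (-1:ℝ) else cst) (hsumN _) ?_
    rintro ⟨d1, d1'⟩ hp
    have hne1 : (Sum.inl d1 : P ⊕ U) ≠ Sum.inl d0 := by
      intro h
      rw [Sum.inl.injEq] at h
      subst h
      exact absurd hp (hgt d1').ne'
    exact tightmove _ _ _ hne1 (by simp) hp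
  have colC : ∀ d0' : U, ∃ d : P, G d d0' (ψ (Sum.inl d)) (ψ (Sum.inr d0')) = Z := by
    intro d0'
    by_contra hcon
    push_neg at hcon
    have hgt : ∀ d, Z < G d d0' (ψ (Sum.inl d)) (ψ (Sum.inr d0')) :=
      fun d => lt_of_le_of_ne (hZle (d, d0')) (Ne.symm (hcon d))
    refine key (fun e => if e = Sum.inr d0' then (-1:ℝ) else cst) (hsumN _) ?_
    rintro ⟨d1, d1'⟩ hp
    have hne2 : (Sum.inr d1' : P ⊕ U) ≠ Sum.inr d0' := by
      intro h
      rw [Sum.inr.injEq] at h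
      subst h
      exact absurd hp (hgt d1).ne'
    exact tightmove _ _ _ (by simp) hne2 hp
  -- define the type vector
  set ϑ : P → U → Bool := fun d d' =>
    if G d d' (ψ (Sum.inl d)) (ψ (Sum.inr d')) = Z then true else false with hϑdef
  have hϑ : ∀ (d : P) (d' : U),
      ϑ d d' = true ↔ G d d' (ψ (Sum.inl d)) (ψ (Sum.inr d')) = Z := by
    intro d d'
    by_cases h : G d d' (ψ (Sum.inl d)) (ψ (Sum.inr d')) = Z <;> simp [hϑdef, h]
  refine ⟨Z, ϑ, hZpos, ?_, ?_, ?_, ?_⟩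
  · intro d
    obtain ⟨d', hd'⟩ := rowC d
    exact ⟨d', (hϑ d d').2 hd'⟩
  · intro d'
    obtain ⟨d, hd⟩ := colC d'
    exact ⟨d, (hϑ d d').2 hd⟩
  · intro d d'
    exact ⟨hZle (d, d'), (hϑ d d').symm⟩
  -- part (iii): flow balance on each equivalence class
  intro a
  set Q : P ⊕ U → P ⊕ U → Prop := fun u v : P ⊕ U =>
    ∃ (i : P) (j : U), ϑ i j = true ∧ u = Sum.inl i ∧ v = Sum.inr j with hQ
  set A : ℝ := ∑ d : P, if Relation.EqvGen Q a (Sum.inl d)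
      then (ψ (Sum.inl d) / σ (Sum.inl d))^2 else 0 with hAdef
  set B : ℝ := ∑ d' : U, if Relation.EqvGen Q a (Sum.inr d')
      then (ψ (Sum.inr d') / σ (Sum.inr d'))^2 else 0 with hBdef
  show A = B
  by_contra hAB
  have hQin : ∀ (i : P) (j : U), G i j (ψ (Sum.inl i)) (ψ (Sum.inr j)) = Z →
      Q (Sum.inl i) (Sum.inr j) := fun i j h => ⟨i, j, (hϑ i j).2 h, rfl, rfl⟩
  have hfor : ∀ (i : P) (j : U), Q (Sum.inl i) (Sum.inr j) →
      (Relation.EqvGen Q a (Sum.inl i) ↔ Relation.EqvGen Q a (Sum.inr j)) := by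
    intro i j h
    constructor
    · exact fun h2 => Relation.EqvGen.trans _ _ _ h2 (Relation.EqvGen.rel _ _ h)
    · exact fun h2 => Relation.EqvGen.trans _ _ _ h2
        (Relation.EqvGen.symm _ _ (Relation.EqvGen.rel _ _ h))
  have hterm : ∀ e : P ⊕ U, 0 < (ψ e / σ e)^2 := fun e => by
    have h1 := hψpos e; have h2 := hσ e; positivity
  have hclassP : ∃ d, Relation.EqvGen Q a (Sum.inl d) := by
    cases a with
    | inl d => exact ⟨d, Relation.EqvGen.refl _⟩
    | inr d' =>
      obtain ⟨d, hd⟩ := colC d'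
      exact ⟨d, (hfor d d' (hQin d d' hd)).2 (Relation.EqvGen.refl _)⟩
  have hclassU : ∃ d', Relation.EqvGen Q a (Sum.inr d') := by
    cases a with
    | inr d' => exact ⟨d', Relation.EqvGen.refl _⟩
    | inl d =>
      obtain ⟨d', hd'⟩ := rowC d
      exact ⟨d', (hfor d d' (hQin d d' hd')).1 (Relation.EqvGen.refl _)⟩
  obtain ⟨dA, hdA⟩ := hclassP
  obtain ⟨dB, hdB⟩ := hclassU
  have hApos : 0 < A := by
    rw [hAdef]
    refine Finset.sum_pos' (fun i _ => ?_) ⟨dA, mem_univ _, ?_⟩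
    · split
      · exact (hterm _).le
      · exact le_rfl
    · rw [if_pos hdA]; exact hterm _
  have hBpos : 0 < B := by
    rw [hBdef]
    refine Finset.sum_pos' (fun i _ => ?_) ⟨dB, mem_univ _, ?_⟩
    · split
      · exact (hterm _).le
      · exact le_rfl
    · rw [if_pos hdB]; exact hterm _
  set ε : ℝ := if A < B then 1 else -1 with hεdef
  have hΔ : 0 < ε * (B - A) := by
    rcases lt_or_gt_of_ne hAB with h | h
    · rw [hεdef, if_pos h]; linarith
    · rw [hεdef, if_neg (not_lt.2 h.le)]; nlinarith
  set mP : ℕ := (univ.filter fun d : P => ¬ Relation.EqvGen Q a (Sum.inl d)).card with hmP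
  set mU : ℕ := (univ.filter fun d' : U => ¬ Relation.EqvGen Q a (Sum.inr d')).card with hmU
  set m : ℕ := mP + mU with hm
  set γ : ℝ := if m = 0 then 0 else ε * (B - A) / 2 with hγdef
  set w : ℝ := γ * B / m with hwdef
  set pp : ℝ := ε * B with hppdef
  set qq : ℝ := ε * A + γ with hqqdef
  have hγ0 : 0 ≤ γ := by
    rw [hγdef]; split
    · exact le_rfl
    · linarith
  have hγlt : γ < ε * (B - A) := by
    rw [hγdef]; split <;> linarith
  have hpq : 0 < pp - qq := by
    have h1 : pp - qq = ε * (B - A) - γ := by rw [hppdef, hqqdef]; ring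
    linarith
  have hwpos : m ≠ 0 → 0 < w := by
    intro hm0
    have hmR : (0:ℝ) < (m:ℝ) := by exact_mod_cast Nat.pos_of_ne_zero hm0
    rw [hwdef, hγdef, if_neg hm0]
    exact div_pos (mul_pos (by linarith) hBpos) hmR
  have hw0 : 0 ≤ w := by
    rcases eq_or_ne m 0 with h | h
    · rw [hwdef, h]; simp
    · exact (hwpos h).le
  set η : P ⊕ U → ℝ := fun e =>
    Sum.casesOn e
      (fun d => if Relation.EqvGen Q a (Sum.inl d)
        then pp * (ψ (Sum.inl d) / σ (Sum.inl d))^2 else w)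
      (fun d' => if Relation.EqvGen Q a (Sum.inr d')
        then -(qq * (ψ (Sum.inr d') / σ (Sum.inr d'))^2) else w) with hηdef
  have hηl : ∀ d : P, η (Sum.inl d) = if Relation.EqvGen Q a (Sum.inl d)
      then pp * (ψ (Sum.inl d) / σ (Sum.inl d))^2 else w := fun d => rfl
  have hηr : ∀ d' : U, η (Sum.inr d') = if Relation.EqvGen Q a (Sum.inr d')
      then -(qq * (ψ (Sum.inr d') / σ (Sum.inr d'))^2) else w := fun d' => rfl
  have hsumη : ∑ e, η e = 0 := by
    rw [Fintype.sum_sum_type]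
    have h1 : ∑ d : P, η (Sum.inl d) = pp * A + (mP:ℝ) * w := by
      have he : ∀ d : P, η (Sum.inl d)
          = pp * (if Relation.EqvGen Q a (Sum.inl d)
              then (ψ (Sum.inl d) / σ (Sum.inl d))^2 else 0)
            + (if Relation.EqvGen Q a (Sum.inl d) then 0 else w) := by
        intro d; rw [hηl]; split <;> simp
      rw [Finset.sum_congr rfl fun d _ => he d, Finset.sum_add_distrib, ← Finset.mul_sum,
        ← hAdef, Finset.sum_ite, Finset.sum_const_zero, zero_add, Finset.sum_const,
        nsmul_eq_mul, ← hmP]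
    have h2 : ∑ d' : U, η (Sum.inr d') = -(qq * B) + (mU:ℝ) * w := by
      have he : ∀ d' : U, η (Sum.inr d')
          = -(qq * (if Relation.EqvGen Q a (Sum.inr d')
              then (ψ (Sum.inr d') / σ (Sum.inr d'))^2 else 0))
            + (if Relation.EqvGen Q a (Sum.inr d') then 0 else w) := by
        intro d'; rw [hηr]; split <;> simp
      rw [Finset.sum_congr rfl fun d' _ => he d', Finset.sum_add_distrib, Finset.sum_neg_distrib,
        ← Finset.mul_sum, ← hBdef, Finset.sum_ite, Finset.sum_const_zero, zero_add,
        Finset.sum_const, nsmul_eq_mul, ← hmU]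
    rw [h1, h2]
    have hwm : (mP:ℝ) * w + (mU:ℝ) * w = γ * B := by
      rcases eq_or_ne m 0 with h0 | h0
      · have hP0 : mP = 0 := by omega
        have hU0 : mU = 0 := by omega
        have hγ0' : γ = 0 := by rw [hγdef, if_pos h0]
        rw [hP0, hU0, hγ0']
        simp
      · have hmR : (m:ℝ) ≠ 0 := by exact_mod_cast h0
        have : (mP:ℝ) + (mU:ℝ) = (m:ℝ) := by rw [hm]; push_cast; ring
        calc (mP:ℝ) * w + (mU:ℝ) * w = (m:ℝ) * w := by rw [← this]; ring
        _ = γ * B := by rw [hwdef]; field_simp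
    have hpqB : pp * A - qq * B = -(γ * B) := by rw [hppdef, hqqdef]; ring
    linarith
  refine key η hsumη ?_
  rintro ⟨i, j⟩ hij
  have hQij : Q (Sum.inl i) (Sum.inr j) := hQin i j hij
  have hX := hψpos (Sum.inl i)
  have hY := hψpos (Sum.inr j)
  have haa := ha (Sum.inl i)
  have hbb := ha (Sum.inr j)
  have hsa := hσ (Sum.inl i)
  have hsb := hσ (Sum.inr j)
  by_cases hin : Relation.EqvGen Q a (Sum.inl i)
  · -- tight pair inside the class of a
    have hinr : Relation.EqvGen Q a (Sum.inr j) := (hfor i j hQij).1 hin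
    have e1 : η (Sum.inl i) = pp * (ψ (Sum.inl i) / σ (Sum.inl i))^2 := by
      rw [hηl, if_pos hin]
    have e2 : η (Sum.inr j) = -(qq * (ψ (Sum.inr j) / σ (Sum.inr j))^2) := by
      rw [hηr, if_pos hinr]
    rw [e1, e2]
    have hc1 : ContinuousAt (fun t : ℝ =>
        ψ (Sum.inl i) + t * (pp * (ψ (Sum.inl i) / σ (Sum.inl i))^2)) 0 := by fun_prop
    have hev1 := auxEv hc1 (z := 0) (by simpa using hX)
    have hc2 : ContinuousAt (fun t : ℝ =>
        ψ (Sum.inr j) + t * -(qq * (ψ (Sum.inr j) / σ (Sum.inr j))^2)) 0 := by fun_prop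
    have hev2 := auxEv hc2 (z := 0) (by simpa using hY)
    have hc3 : ContinuousAt (fun t : ℝ =>
        pp * ψ (Sum.inl i) * (ψ (Sum.inr j) + t * -(qq * (ψ (Sum.inr j) / σ (Sum.inr j))^2))
          - qq * ψ (Sum.inr j) * (ψ (Sum.inl i) + t * (pp * (ψ (Sum.inl i) / σ (Sum.inl i))^2))) 0 := by
      fun_prop
    have hev3 := auxEv hc3 (z := 0) (by
      simp only [zero_mul, add_zero]
      nlinarith [mul_pos (mul_pos hX hY) hpq])
    filter_upwards [hev1, hev2, hev3, eventually_mem_nhdsWithin] with t h1 h2 h3 ht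
    rw [← hij, hGdef, hGdef]
    have hsane := hsa.ne'
    have hsbne := hsb.ne'
    refine auxStep _ _ _ _ _ _ _ t pp qq (hc i j) haa hbb hX hY h1 h2 ?_ ?_ (mul_pos ht h3)
    · field_simp
    · field_simp
      ring
  · -- tight pair outside the class of a
    have hinr' : ¬ Relation.EqvGen Q a (Sum.inr j) := fun h => hin ((hfor i j hQij).2 h)
    have e1 : η (Sum.inl i) = w := by rw [hηl, if_neg hin]
    have e2 : η (Sum.inr j) = w := by rw [hηr, if_neg hinr']
    rw [e1, e2]
    have hmne : m ≠ 0 := by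
      have hmem : i ∈ univ.filter (fun d : P => ¬ Relation.EqvGen Q a (Sum.inl d)) :=
        mem_filter.2 ⟨mem_univ _, hin⟩
      have hPpos : 0 < mP := by rw [hmP]; exact card_pos.2 ⟨i, hmem⟩
      omega
    exact incmove i j w w (hwpos hmne) (hwpos hmne) hij
end

section
/- (Gaussian known-variance rate function, closed form) For all μ₁, μ₂ ∈ ℝ with μ₁ ≥ μ₂, all σ₁, σ₂ > 0 and all ψ₁, ψ₂ > 0: inf over all (m₁, m₂) ∈ ℝ² with m₂ ≥ m₁ of [ψ₁·(μ₁ − m₁)²/(2σ₁²) + ψ₂·(μ₂ − m₂)²/(2σ₂²)] equals (μ₁ − μ₂)² / (2·(σ₁²/ψ₁ + σ₂²/ψ₂)). -/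
/-- **Gaussian known-variance rate function (closed form).** For `μ₁ ≥ μ₂`,
`σ₁, σ₂ > 0`, `ψ₁, ψ₂ > 0`, the infimum over `m₂ ≥ m₁` of the ψ-weighted sum of
Gaussian Kullback–Leibler divergences equals
`(μ₁ − μ₂)² / (2·(σ₁²/ψ₁ + σ₂²/ψ₂))`. -/
theorem stmt_10 (μ₁ μ₂ σ₁ σ₂ ψ₁ ψ₂ : ℝ) (hμ : μ₂ ≤ μ₁)
    (hσ₁ : 0 < σ₁) (hσ₂ : 0 < σ₂) (hψ₁ : 0 < ψ₁) (hψ₂ : 0 < ψ₂) :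
    sInf {v : ℝ | ∃ m₁ m₂ : ℝ, m₁ ≤ m₂ ∧
        v = ψ₁ * (μ₁ - m₁)^2 / (2 * σ₁^2) + ψ₂ * (μ₂ - m₂)^2 / (2 * σ₂^2)}
      = (μ₁ - μ₂)^2 / (2 * (σ₁^2 / ψ₁ + σ₂^2 / ψ₂)) := by
  have hs1 : (0:ℝ) < σ₁^2 := by positivity
  have hs2 : (0:ℝ) < σ₂^2 := by positivity
  have hden : (0:ℝ) < 2 * (σ₁^2 / ψ₁ + σ₂^2 / ψ₂) := by positivity
  -- lower bound
  have hlb : ∀ v ∈ {v : ℝ | ∃ m₁ m₂ : ℝ, m₁ ≤ m₂ ∧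
      v = ψ₁ * (μ₁ - m₁)^2 / (2 * σ₁^2) + ψ₂ * (μ₂ - m₂)^2 / (2 * σ₂^2)},
      (μ₁ - μ₂)^2 / (2 * (σ₁^2 / ψ₁ + σ₂^2 / ψ₂)) ≤ v := by
    rintro v ⟨m₁, m₂, hm, rfl⟩
    rw [div_le_iff₀ hden]
    have key : (ψ₁ * σ₂^2 * (μ₁ - m₁) + ψ₂ * σ₁^2 * (μ₂ - m₂))^2 ≥ 0 := sq_nonneg _
    have hd : (μ₁ - m₁) - (μ₂ - m₂) ≥ μ₁ - μ₂ := by linarith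
    have hd0 : (0:ℝ) ≤ μ₁ - μ₂ := by linarith
    have hsq : ((μ₁ - m₁) - (μ₂ - m₂))^2 ≥ (μ₁ - μ₂)^2 := by nlinarith
    have hexp : (ψ₁ * (μ₁ - m₁) ^ 2 / (2 * σ₁ ^ 2) + ψ₂ * (μ₂ - m₂) ^ 2 / (2 * σ₂ ^ 2)) *
        (2 * (σ₁ ^ 2 / ψ₁ + σ₂ ^ 2 / ψ₂)) =
        (ψ₁ * (μ₁ - m₁) ^ 2 * (2 * σ₂ ^ 2) + ψ₂ * (μ₂ - m₂) ^ 2 * (2 * σ₁ ^ 2)) *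
        (2 * (σ₁ ^ 2 * ψ₂ + σ₂ ^ 2 * ψ₁)) / ((2 * σ₁ ^ 2) * (2 * σ₂ ^ 2) * (ψ₁ * ψ₂)) := by
      field_simp
    rw [hexp, le_div_iff₀ (by positivity)]
    nlinarith [sq_nonneg (ψ₁ * σ₂^2 * (μ₁ - m₁) + ψ₂ * σ₁^2 * (μ₂ - m₂)),
      mul_pos hψ₁ hψ₂, mul_pos hs1 hs2, mul_pos (mul_pos hψ₁ hψ₂) (mul_pos hs1 hs2)]
  -- the infimum is attained at the weighted mean
  set m : ℝ := (ψ₁ / σ₁^2 * μ₁ + ψ₂ / σ₂^2 * μ₂) / (ψ₁ / σ₁^2 + ψ₂ / σ₂^2) with hm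
  have hmem : (μ₁ - μ₂)^2 / (2 * (σ₁^2 / ψ₁ + σ₂^2 / ψ₂)) ∈ {v : ℝ | ∃ m₁ m₂ : ℝ, m₁ ≤ m₂ ∧
      v = ψ₁ * (μ₁ - m₁)^2 / (2 * σ₁^2) + ψ₂ * (μ₂ - m₂)^2 / (2 * σ₂^2)} := by
    refine ⟨m, m, le_refl _, ?_⟩
    rw [hm]
    field_simp
    ring
  exact le_antisymm (csInf_le ⟨_, hlb⟩ hmem) (le_csInf ⟨_, hmem⟩ hlb)
end

section
/- (Logarithmic growth of cumulative sampling effort, from the proof of Lemma 3) Let Γ > 0 and let (s_n)_{n ≥ 1} be a sequence of real numbers such that Γ·exp(−2Γ·s₁) ≤ 1 and s_{n+1} ≥ s_n + (1/2)·exp(−2Γ·s_n) for every n ≥ 1. Then for every n ≥ 1: s_n ≥ (1/(2Γ))·ln( exp(2Γ·s₁) + Γ·(n − 1) ). -/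
/-- **Logarithmic growth of cumulative sampling effort (from the proof of
Lemma 3).** If `Γ > 0`, `Γ·exp(−2Γ·s₁) ≤ 1` and
`s_{n+1} ≥ s_n + (1/2)·exp(−2Γ·s_n)` for all `n ≥ 1`, then for all `n ≥ 1`,
`s_n ≥ (1/(2Γ))·ln(exp(2Γ·s₁) + Γ·(n − 1))`. -/
theorem stmt_16 (Γ : ℝ) (hΓ : 0 < Γ) (s : ℕ → ℝ)
    (h1 : Γ * Real.exp (-2 * Γ * s 1) ≤ 1)
    (hrec : ∀ n : ℕ, 1 ≤ n → s n + (1/2) * Real.exp (-2 * Γ * s n) ≤ s (n + 1)) :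
    ∀ n : ℕ, 1 ≤ n →
      (1 / (2 * Γ)) * Real.log (Real.exp (2 * Γ * s 1) + Γ * ((n : ℝ) - 1))
        ≤ s n := by
  have key : ∀ n : ℕ, 1 ≤ n →
      Real.exp (2 * Γ * s 1) + Γ * ((n : ℝ) - 1) ≤ Real.exp (2 * Γ * s n) := by
    intro n hn
    induction n with
    | zero => omega
    | succ m ih =>
      rcases Nat.eq_or_lt_of_le hn with h | h
      · -- m + 1 = 1
        have hm : m = 0 := by omega
        subst hm
        simp
      · have hm : 1 ≤ m := by omega
        have IH := ih hm
        have hstep := hrec m hm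
        -- exp(2Γ s_{m+1}) ≥ exp(2Γ s_m) * exp(Γ exp(-2Γ s_m))
        have h2 : 2 * Γ * s m + Γ * Real.exp (-2 * Γ * s m) ≤ 2 * Γ * s (m + 1) := by
          nlinarith [Real.exp_pos (-2 * Γ * s m)]
        have h3 : Real.exp (2 * Γ * s m) * (1 + Γ * Real.exp (-2 * Γ * s m))
            ≤ Real.exp (2 * Γ * s (m + 1)) := by
          calc Real.exp (2 * Γ * s m) * (1 + Γ * Real.exp (-2 * Γ * s m))
              ≤ Real.exp (2 * Γ * s m) * Real.exp (Γ * Real.exp (-2 * Γ * s m)) := by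
                apply mul_le_mul_of_nonneg_left
                · linarith [Real.add_one_le_exp (Γ * Real.exp (-2 * Γ * s m))]
                · positivity
            _ = Real.exp (2 * Γ * s m + Γ * Real.exp (-2 * Γ * s m)) := by
                rw [← Real.exp_add]
            _ ≤ Real.exp (2 * Γ * s (m + 1)) := Real.exp_le_exp.mpr h2
        have h4 : Real.exp (2 * Γ * s m) + Γ ≤ Real.exp (2 * Γ * s (m + 1)) := by
          have hexp : Real.exp (2 * Γ * s m) * (Γ * Real.exp (-2 * Γ * s m)) = Γ := by
            rw [show Real.exp (2 * Γ * s m) * (Γ * Real.exp (-2 * Γ * s m))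
              = Γ * (Real.exp (2 * Γ * s m) * Real.exp (-2 * Γ * s m)) by ring,
              ← Real.exp_add]
            simp [show 2 * Γ * s m + -2 * Γ * s m = 0 by ring]
          nlinarith
        push_cast
        nlinarith
  intro n hn
  have hpos : (0 : ℝ) < Real.exp (2 * Γ * s 1) + Γ * ((n : ℝ) - 1) := by
    have : (0 : ℝ) ≤ (n : ℝ) - 1 := by
      have : (1 : ℝ) ≤ (n : ℝ) := by exact_mod_cast hn
      linarith
    have := Real.exp_pos (2 * Γ * s 1)
    nlinarith
  have hlog := Real.log_le_log hpos (key n hn)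
  rw [Real.log_exp] at hlog
  have h2Γ : 0 < 2 * Γ := by linarith
  rw [div_mul_eq_mul_div, one_mul, div_le_iff₀ h2Γ]
  linarith [hlog]
end

section
/- (Vanishing weighted averages, from Step 2.1 of the proof of Theorem 3) Let (a_t)_{t ≥ 1} be a sequence with 0 ≤ a_t ≤ 1 for all t and Σ_{t=1}^{∞} a_t = ∞, let c > 0, B ≥ 0, and let (b_t)_{t ≥ 1} satisfy 0 ≤ b_t ≤ B for all t and, for some index T̃ ≥ 1, b_t ≤ exp(−c·Σ_{τ=1}^{t−1} a_τ) for all t ≥ T̃. Then lim_{T → ∞} (Σ_{t=1}^{T} a_t·b_t) / (Σ_{t=1}^{T} a_t) = 0. -/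
open Finset

lemma key_exp_ineq (c x P : ℝ) (hc : 0 < c) (hx0 : 0 ≤ x) (hx1 : x ≤ 1) :
    x * Real.exp (-c * P) ≤
      (Real.exp c / c) * (Real.exp (-c * P) - Real.exp (-c * (P + x))) := by
  have h1 : Real.exp (-c * (P + x)) = Real.exp (-c * P) * Real.exp (-c * x) := by
    rw [← Real.exp_add]; ring_nf
  rw [h1]
  have hEP : 0 < Real.exp (-c * P) := Real.exp_pos _
  have key : c * x ≤ Real.exp c * (1 - Real.exp (-c * x)) := by
    have h2 : c * x * Real.exp (-c * x) ≤ 1 - Real.exp (-c * x) := by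
      have := Real.add_one_le_exp (c * x)
      have hE : 0 < Real.exp (-c * x) := Real.exp_pos _
      have h3 : Real.exp (c * x) * Real.exp (-c * x) = 1 := by
        rw [← Real.exp_add]; ring_nf; exact Real.exp_zero
      nlinarith
    have h4 : Real.exp c * (c * x * Real.exp (-c * x)) ≥ c * x := by
      have h5 : Real.exp c * Real.exp (-c * x) = Real.exp (c - c * x) := by
        rw [← Real.exp_add]; ring_nf
      have h6 : (1 : ℝ) ≤ Real.exp (c - c * x) := by
        apply Real.one_le_exp; nlinarith
      nlinarith [mul_nonneg hc.le hx0]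
    have hec : 0 < Real.exp c := Real.exp_pos _
    nlinarith
  have : (Real.exp c / c) * (Real.exp (-c * P) - Real.exp (-c * P) * Real.exp (-c * x))
      = (Real.exp c * (1 - Real.exp (-c * x))) * Real.exp (-c * P) / c := by ring
  rw [this, le_div_iff₀ hc]
  nlinarith

/-- **Vanishing weighted averages (from Step 2.1 of the proof of Theorem 3).**
If `0 ≤ a_t ≤ 1` with `Σ a_t = ∞`, `0 ≤ b_t ≤ B`, and eventually
`b_t ≤ exp(−c·Σ_{τ=1}^{t−1} a_τ)` for some `c > 0`, then the weighted average
`(Σ_{t≤T} a_t b_t)/(Σ_{t≤T} a_t) → 0` as `T → ∞`. -/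
theorem stmt_18 (a b : ℕ → ℝ)
    (ha : ∀ t : ℕ, 1 ≤ t → 0 ≤ a t ∧ a t ≤ 1)
    (hdiv : Filter.Tendsto (fun T : ℕ => ∑ t ∈ Finset.Icc 1 T, a t)
      Filter.atTop Filter.atTop)
    (c : ℝ) (hc : 0 < c) (B : ℝ) (hB : 0 ≤ B)
    (hb : ∀ t : ℕ, 1 ≤ t → 0 ≤ b t ∧ b t ≤ B)
    (T₀ : ℕ) (hT₀ : 1 ≤ T₀)
    (hbexp : ∀ t : ℕ, T₀ ≤ t →
      b t ≤ Real.exp (-c * ∑ τ ∈ Finset.Icc 1 (t - 1), a τ)) :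
    Filter.Tendsto
      (fun T : ℕ => (∑ t ∈ Finset.Icc 1 T, a t * b t) / (∑ t ∈ Finset.Icc 1 T, a t))
      Filter.atTop (nhds 0) := by
  set S : ℕ → ℝ := fun T => ∑ t ∈ Finset.Icc 1 T, a t with hS
  set N : ℕ → ℝ := fun T => ∑ t ∈ Finset.Icc 1 T, a t * b t with hN
  set E : ℕ → ℝ := fun T => Real.exp (-c * S T) with hE
  -- step : for t ≥ 1, S t = S (t-1) + a t
  have hstep : ∀ t : ℕ, 1 ≤ t → S t = S (t - 1) + a t := by
    intro t ht
    obtain ⟨s, rfl⟩ : ∃ s, t = s + 1 := ⟨t - 1, (Nat.succ_pred_eq_of_pos ht).symm⟩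
    simp only [hS, Nat.add_sub_cancel]
    rw [Finset.sum_Icc_succ_top (Nat.le_add_left 1 s)]
  have hNstep : ∀ t : ℕ, N (t + 1) = N t + a (t + 1) * b (t + 1) := by
    intro t
    simp only [hN]
    rw [Finset.sum_Icc_succ_top (Nat.le_add_left 1 t)]
  -- term bound for t ≥ T₀
  have hterm : ∀ t : ℕ, T₀ ≤ t →
      a t * b t ≤ (Real.exp c / c) * (E (t - 1) - E t) := by
    intro t ht
    have ht1 : 1 ≤ t := le_trans hT₀ ht
    have haT := ha t ht1
    have hbT := hb t ht1
    calc a t * b t ≤ a t * Real.exp (-c * S (t - 1)) := by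
          exact mul_le_mul_of_nonneg_left (hbexp t ht) haT.1
      _ ≤ (Real.exp c / c) * (Real.exp (-c * S (t-1)) - Real.exp (-c * (S (t-1) + a t))) :=
          key_exp_ineq c (a t) (S (t - 1)) hc haT.1 haT.2
      _ = (Real.exp c / c) * (E (t - 1) - E t) := by
          simp only [hE]
          rw [hstep t ht1]
  -- Lyapunov: N T + (e^c/c) E T is non-increasing from T₀ - 1 onwards
  have hlyap : ∀ T : ℕ, T₀ - 1 ≤ T →
      N T + (Real.exp c / c) * E T ≤ N (T₀ - 1) + (Real.exp c / c) * E (T₀ - 1) := by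
    intro T hT
    induction T, hT using Nat.le_induction with
    | base => exact le_refl _
    | succ T hT ih =>
        have h1 : T₀ ≤ T + 1 := by omega
        have h2 := hterm (T + 1) h1
        have h3 : (T + 1) - 1 = T := by omega
        rw [h3] at h2
        rw [hNstep T]
        linarith
  set M : ℝ := N (T₀ - 1) + (Real.exp c / c) * E (T₀ - 1) with hM
  have hNmono : Monotone N := by
    apply monotone_nat_of_le_succ
    intro t
    rw [hNstep t]
    have h1 := ha (t+1) (Nat.le_add_left 1 t)
    have h2 := hb (t+1) (Nat.le_add_left 1 t)
    nlinarith
  have hNbound : ∀ T : ℕ, N T ≤ M := by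
    intro T
    rcases le_or_gt T₀ (T + 1) with h | h
    · have hT : T₀ - 1 ≤ T := by omega
      have := hlyap T hT
      have hEpos : 0 ≤ (Real.exp c / c) * E T := by
        apply mul_nonneg (by positivity) (Real.exp_pos _).le
      calc N T ≤ N T + (Real.exp c / c) * E T := le_add_of_nonneg_right hEpos
        _ ≤ M := this
    · have : T ≤ T₀ - 1 := by omega
      have := hNmono this
      have hEpos : 0 ≤ (Real.exp c / c) * E (T₀ - 1) := by
        apply mul_nonneg (by positivity) (Real.exp_pos _).le
      calc N T ≤ N (T₀ - 1) := this
        _ ≤ N (T₀ - 1) + (Real.exp c / c) * E (T₀ - 1) := le_add_of_nonneg_right hEpos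
        _ = M := hM.symm
  have hNnonneg : ∀ T : ℕ, 0 ≤ N T := by
    intro T
    apply Finset.sum_nonneg
    intro t ht
    rw [Finset.mem_Icc] at ht
    exact mul_nonneg (ha t ht.1).1 (hb t ht.1).1
  -- squeeze
  have hMS : Filter.Tendsto (fun T : ℕ => M / S T) Filter.atTop (nhds 0) :=
    Filter.Tendsto.div_atTop tendsto_const_nhds hdiv
  have hev : ∀ᶠ T : ℕ in Filter.atTop, 0 < S T :=
    hdiv.eventually_gt_atTop 0
  apply squeeze_zero' (g := fun T => M / S T)
  · filter_upwards [hev] with T hT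
    exact div_nonneg (hNnonneg T) hT.le
  · filter_upwards [hev] with T hT
    gcongr
    exact hNbound T
  · exact hMS
end
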